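/- Let p > q be odd primes and n = pq. Working over the algebraic closure of 𝔽_p, one has F_n(x) ≡ (x^q − 1)^{p−1}·F_q(x) − F_q(x)^p (mod p) and F_n'(x) ≡ −(x^q − 1)^{p−2}·u_q(x) (mod p), where u_q(x) = Φ_q(x)² − q·x^{q−1}. Moreover, for any root x₀ ∈ 𝔽̄_p of F_n, the multiplicity of x₀ as a root of F_n equals 1 plus the multiplicity of x₀ as a root of u_q. -/

import Mathlib

open Polynomial

/-- Fekete polynomial of the principal Dirichlet character mod `n`. -/
noncomputable def Fek (n : ℕ) : Polynomial ℤ :=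
  ∑ a ∈ Finset.range n, if Nat.gcd a n = 1 then X ^ a else 0

open Finset in
lemma fek_map {K : Type*} [Field K] (n : ℕ) :
    (Fek n).map (Int.castRingHom K) =
      ∑ a ∈ range n, if Nat.gcd a n = 1 then (X : K[X]) ^ a else 0 := by
  simp [Fek, Polynomial.map_sum, apply_ite (Polynomial.map (Int.castRingHom K))]

open Finset in
lemma fek_prime {K : Type*} [Field K] {q : ℕ} (hq : q.Prime) :
    (Fek q).map (Int.castRingHom K) = (∑ i ∈ range q, (X : K[X]) ^ i) - 1 := by
  rw [fek_map, eq_sub_iff_add_eq]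
  have h : ∀ i ∈ range q, ((X : K[X]) ^ i) =
      (if Nat.gcd i q = 1 then (X : K[X]) ^ i else 0) + (if i = 0 then 1 else 0) := by
    intro i hi
    rcases eq_or_ne i 0 with rfl | h0
    · simp [Nat.gcd_zero_left, hq.ne_one]
    · have hgcd : Nat.gcd i q = 1 := by
        have : ¬ q ∣ i := by
          intro hd
          have := Nat.le_of_dvd (Nat.pos_of_ne_zero h0) hd
          have := mem_range.mp hi
          omega
        exact Nat.coprime_comm.mp (hq.coprime_iff_not_dvd.mpr this)
      simp [hgcd, h0]
  rw [Finset.sum_congr rfl h, Finset.sum_add_distrib, Finset.sum_ite_eq' (range q) 0]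
  simp [hq.pos]

open Finset in
lemma partA {K : Type*} [Field K] {p q : ℕ} [Fact p.Prime] [CharP K p] (hq : q.Prime)
    (hne : p ≠ q) :
    (Fek (p * q)).map (Int.castRingHom K) =
      ((X : K[X]) ^ q - 1) ^ (p - 1) * ((Fek q).map (Int.castRingHom K)) -
        ((Fek q).map (Int.castRingHom K)) ^ p := by
  have pp : p.Prime := Fact.out
  have hq0 : 0 < q := hq.pos
  have hp0 : 0 < p := pp.pos
  set Fq : K[X] := (Fek q).map (Int.castRingHom K) with hFq
  have hFq' : Fq = ∑ a ∈ range q, if Nat.gcd a q = 1 then (X : K[X]) ^ a else 0 := fek_map q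
  -- the sum over a < p*q with gcd(a,q) = 1
  have hA : (∑ a ∈ range (p * q), if Nat.gcd a q = 1 then (X : K[X]) ^ a else 0)
      = (∑ j ∈ range p, ((X : K[X]) ^ q) ^ j) * Fq := by
    have hbij : (∑ a ∈ range (p * q), if Nat.gcd a q = 1 then (X : K[X]) ^ a else 0)
        = ∑ x ∈ range p ×ˢ range q,
            (if Nat.gcd x.2 q = 1 then (X : K[X]) ^ (q * x.1 + x.2) else 0) := by
      refine Finset.sum_nbij' (fun a => (a / q, a % q)) (fun x => q * x.1 + x.2) ?_ ?_ ?_ ?_ ?_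
      · intro a ha
        rw [mem_range] at ha
        rw [mem_product, mem_range, mem_range]
        constructor
        · exact Nat.div_lt_of_lt_mul (by rwa [mul_comm] at ha)
        · exact Nat.mod_lt _ hq0
      · intro x hx
        rw [mem_product, mem_range, mem_range] at hx
        rw [mem_range]
        calc q * x.1 + x.2 < q * x.1 + q := by omega
          _ = q * (x.1 + 1) := by ring
          _ ≤ q * p := Nat.mul_le_mul_left q hx.1
          _ = p * q := mul_comm q p
      · intro a _; exact Nat.div_add_mod a q
      · intro x hx
        rw [mem_product, mem_range, mem_range] at hx
        have h1 : (q * x.1 + x.2) / q = x.1 := by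
          rw [Nat.mul_add_div hq0, Nat.div_eq_of_lt hx.2, add_zero]
        have h2 : (q * x.1 + x.2) % q = x.2 := by
          rw [Nat.mul_add_mod, Nat.mod_eq_of_lt hx.2]
        simp [h1, h2]
      · intro a ha
        have h1 : Nat.gcd a q = Nat.gcd (a % q) q := by
          conv_lhs => rw [Nat.gcd_comm, Nat.gcd_rec]
        have h2 : q * (a / q) + a % q = a := Nat.div_add_mod a q
        simp only [← h1, h2]
    rw [hbij, Finset.sum_product, hFq']
    rw [Finset.sum_mul]
    refine Finset.sum_congr rfl fun j _ => ?_
    rw [Finset.mul_sum]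
    refine Finset.sum_congr rfl fun i _ => ?_
    rw [mul_ite, mul_zero, pow_add, pow_mul]
  -- geometric sum is (X^q - 1)^(p-1)
  have hgeom : (∑ j ∈ range p, ((X : K[X]) ^ q) ^ j) = ((X : K[X]) ^ q - 1) ^ (p - 1) := by
    have hne0 : ((X : K[X]) ^ q - 1) ≠ 0 := by
      have := X_pow_sub_C_ne_zero hq0 (1 : K)
      rwa [map_one] at this
    apply mul_right_cancel₀ hne0
    rw [geom_sum_mul, ← pow_succ, Nat.sub_add_cancel hp0]
    rw [sub_pow_char, one_pow, ← pow_mul, mul_comm q p, pow_mul]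
  -- the sum over multiples of p
  have hB : (∑ a ∈ range (p * q), if Nat.gcd a q = 1 ∧ p ∣ a then (X : K[X]) ^ a else 0)
      = Fq ^ p := by
    have h1 : (∑ a ∈ range (p * q), if Nat.gcd a q = 1 ∧ p ∣ a then (X : K[X]) ^ a else 0)
        = ∑ a ∈ (range (p * q)).filter (fun a => p ∣ a),
            (if Nat.gcd a q = 1 then (X : K[X]) ^ a else 0) := by
      rw [Finset.sum_filter]
      refine Finset.sum_congr rfl fun a _ => ?_
      by_cases h1 : Nat.gcd a q = 1 <;> by_cases h2 : p ∣ a <;> simp [h1, h2]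
    have h2 : (∑ a ∈ (range (p * q)).filter (fun a => p ∣ a),
            (if Nat.gcd a q = 1 then (X : K[X]) ^ a else 0))
        = ∑ b ∈ range q, (if Nat.gcd b q = 1 then (X : K[X]) ^ (p * b) else 0) := by
      refine Finset.sum_nbij' (fun a => a / p) (fun b => p * b) ?_ ?_ ?_ ?_ ?_
      · intro a ha
        rw [mem_filter, mem_range] at ha
        rw [mem_range]
        exact Nat.div_lt_of_lt_mul ha.1
      · intro b hb
        rw [mem_range] at hb
        rw [mem_filter, mem_range]
        exact ⟨(Nat.mul_lt_mul_left hp0).mpr hb, Dvd.intro b rfl⟩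
      · intro a ha
        rw [mem_filter] at ha
        exact Nat.mul_div_cancel' ha.2
      · intro b _; exact Nat.mul_div_cancel_left b hp0
      · intro a ha
        rw [mem_filter] at ha
        obtain ⟨b, rfl⟩ := ha.2
        simp only [Nat.mul_div_cancel_left b hp0]
        have hco : Nat.gcd (p * b) q = 1 ↔ Nat.gcd b q = 1 := by
          constructor
          · intro h
            exact Nat.Coprime.coprime_dvd_left (dvd_mul_left b p) h
          · intro h
            have hpq : Nat.Coprime p q := (Nat.coprime_primes Fact.out hq).mpr hne
            exact Nat.Coprime.mul hpq h
        by_cases h : Nat.gcd b q = 1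
        · rw [if_pos (hco.mpr h), if_pos h]
        · rw [if_neg (fun hh => h (hco.mp hh)), if_neg h]
    rw [h1, h2, hFq', sum_pow_char]
    refine Finset.sum_congr rfl fun b _ => ?_
    simp [apply_ite (· ^ p), ← pow_mul, mul_comm b p, zero_pow pp.ne_zero]
  -- splitting
  rw [fek_map, eq_sub_iff_add_eq, ← hB, ← hgeom, ← hA, ← Finset.sum_add_distrib]
  refine Finset.sum_congr rfl fun a _ => ?_
  have hiff : Nat.gcd a (p * q) = 1 ↔ Nat.gcd a q = 1 ∧ ¬ p ∣ a := by
    rw [show (Nat.gcd a (p * q) = 1) ↔ Nat.Coprime a (p * q) from Iff.rfl,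
      Nat.coprime_mul_iff_right]
    have : Nat.Coprime a p ↔ ¬ p ∣ a := by
      rw [Nat.coprime_comm]
      exact (Fact.out : p.Prime).coprime_iff_not_dvd
    rw [this]
    tauto
  by_cases h1 : Nat.gcd a q = 1 <;> by_cases h2 : p ∣ a <;>
    simp [h1, h2, hiff.mpr, hiff]

open Finset in
lemma phi_coeff {K : Type*} [Semiring K] (q k : ℕ) :
    (∑ i ∈ range q, (X : K[X]) ^ i).coeff k = if k < q then 1 else 0 := by
  simp [finset_sum_coeff, coeff_X_pow, Finset.sum_ite_eq, Finset.mem_range]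

theorem stmt14 (p q : ℕ) [Fact p.Prime] (hq : q.Prime)
    (hoddp : Odd p) (hoddq : Odd q) (hlt : q < p)
    (Fn Fq uq : Polynomial (AlgebraicClosure (ZMod p)))
    (hFn : Fn = (Fek (p * q)).map (Int.castRingHom (AlgebraicClosure (ZMod p))))
    (hFq : Fq = (Fek q).map (Int.castRingHom (AlgebraicClosure (ZMod p))))
    (huq : uq = (((∑ i ∈ Finset.range q, X ^ i) ^ 2 - C (q : ℤ) * X ^ (q - 1)) :
        Polynomial ℤ).map (Int.castRingHom (AlgebraicClosure (ZMod p)))) :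
    Fn = (X ^ q - 1) ^ (p - 1) * Fq - Fq ^ p ∧
    derivative Fn = -((X ^ q - 1) ^ (p - 2) * uq) ∧
    ∀ x₀ : AlgebraicClosure (ZMod p), Fn.eval x₀ = 0 →
      rootMultiplicity x₀ Fn = rootMultiplicity x₀ uq + 1 := by
  classical
  set K := AlgebraicClosure (ZMod p) with hK
  have pp : p.Prime := Fact.out
  haveI : CharP K p := charP_of_injective_algebraMap
    (algebraMap (ZMod p) K).injective p
  have hq2 : q ≠ 2 := by rintro rfl; rw [Nat.odd_iff] at hoddq; omega
  have hq3 : 3 ≤ q := by have := hq.two_le; omega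
  have hp1 : 1 ≤ p := pp.pos
  -- Part 1
  have part1 : Fn = (X ^ q - 1) ^ (p - 1) * Fq - Fq ^ p := by
    rw [hFn, hFq]; exact partA hq (by omega)
  set Φ : K[X] := ∑ i ∈ Finset.range q, X ^ i with hΦ
  have hFqΦ : Fq = Φ - 1 := by rw [hFq]; exact fek_prime hq
  have huqΦ : uq = Φ ^ 2 - C (q : K) * X ^ (q - 1) := by
    rw [huq, hΦ]
    rw [Polynomial.map_sub, Polynomial.map_pow, Polynomial.map_sum, Polynomial.map_mul,
      Polynomial.map_pow, map_C, Polynomial.map_X]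
    simp
    exact (map_natCast C q).symm
  have hgeom : Φ * (X - 1) = X ^ q - 1 := geom_sum_mul X q
  have hder : derivative Φ * (X - 1) + Φ = C (q : K) * X ^ (q - 1) := by
    have h := congrArg derivative hgeom
    simp only [derivative_mul, derivative_sub, derivative_X, derivative_one, derivative_X_pow,
      sub_zero, mul_one] at h
    convert h using 2 <;> simp
  have hpK : ((p : ℕ) : K) = 0 := CharP.cast_eq_zero K p
  -- Part 2
  have part2 : derivative Fn = -((X ^ q - 1) ^ (p - 2) * uq) := by
    have hc1 : (((p - 1 : ℕ) : K)) = -1 := by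
      rw [Nat.cast_sub hp1, hpK]; ring
    rw [part1, hFqΦ, huqΦ]
    rw [derivative_sub, derivative_mul, derivative_pow, derivative_pow, derivative_sub,
      derivative_X_pow, derivative_one, derivative_sub, derivative_one, sub_zero, sub_zero]
    rw [show ((p - 1 : ℕ) : K) = -1 from hc1, hpK, map_neg, map_one, map_zero, zero_mul,
      zero_mul, sub_zero]
    rw [show p - 1 - 1 = p - 2 by omega, show p - 1 = (p - 2) + 1 by omega, pow_succ]
    linear_combination ((X ^ q - 1 : K[X]) ^ (p - 2) * Φ) * hder -
      ((X ^ q - 1 : K[X]) ^ (p - 2) * derivative Φ) * hgeom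
  -- basic nonvanishing facts
  have hq1K : ((q - 1 : ℕ) : K) ≠ 0 := by
    rw [Ne, CharP.cast_eq_zero_iff K p]
    intro hdvd
    have := Nat.le_of_dvd (by omega) hdvd
    omega
  have hcoeffuq : uq.coeff (q - 2) = ((q - 1 : ℕ) : K) := by
    rw [huqΦ, coeff_sub, sq, coeff_mul]
    have hterm : ∀ x ∈ Finset.HasAntidiagonal.antidiagonal (q - 2), Φ.coeff x.1 * Φ.coeff x.2 = 1 := by
      intro x hx
      rw [Finset.HasAntidiagonal.mem_antidiagonal] at hx
      rw [hΦ, phi_coeff, phi_coeff, if_pos (by omega), if_pos (by omega), mul_one]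
    rw [Finset.sum_congr rfl hterm, Finset.sum_const, Finset.Nat.card_antidiagonal,
      coeff_C_mul, coeff_X_pow, if_neg (by omega), mul_zero, sub_zero]
    simp [show q - 2 + 1 = q - 1 by omega]
  have huq0 : uq ≠ 0 := by
    intro h
    rw [h, coeff_zero] at hcoeffuq
    exact hq1K hcoeffuq.symm
  have hXq0 : ((X : K[X]) ^ q - 1) ≠ 0 := by
    have := X_pow_sub_C_ne_zero hq.pos (1 : K)
    rwa [map_one] at this
  have hderFn0 : derivative Fn ≠ 0 := by
    rw [part2]
    exact neg_ne_zero.mpr (mul_ne_zero (pow_ne_zero _ hXq0) huq0)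
  have hFn0 : Fn ≠ 0 := by
    intro h
    exact hderFn0 (by rw [h, derivative_zero])
  -- no high-order divisibility of uq
  have hnotdvd : ∀ c : K, ¬ ((X - C c) ^ p ∣ uq) := by
    intro c hdvd
    obtain ⟨w, hw⟩ := hdvd
    have hw0 : w ≠ 0 := by
      rintro rfl
      rw [mul_zero] at hw
      exact huq0 hw
    have hdeg : uq.natDegree = p + w.natDegree := by
      rw [hw, natDegree_mul (pow_ne_zero _ (X_sub_C_ne_zero c)) hw0, natDegree_pow,
        natDegree_X_sub_C, mul_one]
    have hdegΦ : Φ.natDegree ≤ q - 1 := by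
      rw [hΦ]
      refine natDegree_sum_le_of_forall_le _ _ fun i hi => ?_
      rw [natDegree_X_pow]
      have := Finset.mem_range.mp hi
      omega
    have hdegu : uq.natDegree ≤ 2 * q - 2 := by
      rw [huqΦ]
      refine (natDegree_sub_le _ _).trans (max_le ?_ ?_)
      · refine natDegree_pow_le.trans ?_
        omega
      · refine (natDegree_C_mul_le _ _).trans ?_
        rw [natDegree_X_pow]
        omega
    have hwdeg : w.natDegree < q - 2 := by omega
    have hzero : uq.coeff (q - 2) = 0 := by
      rw [hw, show ((X : K[X]) - C c) ^ p = X ^ p - C (c ^ p) by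
        rw [sub_pow_char, ← C_pow], sub_mul, coeff_sub, mul_comm ((X : K[X]) ^ p) w,
        coeff_mul_X_pow', if_neg (by omega), coeff_C_mul,
        coeff_eq_zero_of_natDegree_lt hwdeg, mul_zero, zero_sub, neg_zero]
    rw [hcoeffuq] at hzero
    exact hq1K hzero
  refine ⟨part1, part2, ?_⟩
  intro c hc
  -- c is not a q-th root of unity
  have hcq : c ^ q - 1 ≠ 0 := by
    intro h0
    have hFqc : Fq.eval c ≠ 0 := by
      rw [hFqΦ, eval_sub, eval_one]
      rcases eq_or_ne c 1 with rfl | hc1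
      · have hev : Φ.eval 1 = (q : K) := by simp [hΦ, eval_finset_sum]
        rw [hev]
        intro h
        apply hq1K
        rw [Nat.cast_sub hq.one_lt.le, Nat.cast_one, h]
      · have h2 := congrArg (eval c) hgeom
        simp only [eval_mul, eval_sub, eval_one, eval_pow, eval_X] at h2
        rw [h0] at h2
        have hΦc : Φ.eval c = 0 := by
          rcases mul_eq_zero.mp h2 with h | h
          · exact h
          · exact absurd (by rwa [sub_eq_zero] at h) hc1
        rw [hΦc]
        simp
    apply hFqc
    have h3 : Fn.eval c = -(Fq.eval c) ^ p := by
      rw [part1]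
      simp [eval_sub, eval_mul, eval_pow, h0, zero_pow (show p - 1 ≠ 0 by omega)]
    rw [hc] at h3
    have h4 : (Fq.eval c) ^ p = 0 := by
      have := h3.symm
      rwa [neg_eq_zero] at this
    exact pow_eq_zero_iff pp.ne_zero |>.mp h4
  -- decomposition at root
  have hm1 : 1 ≤ rootMultiplicity c Fn := (rootMultiplicity_pos hFn0).mpr hc
  set m := rootMultiplicity c Fn with hm
  set g := Fn /ₘ (X - C c) ^ m with hgdef
  have hsep : (X - C c) ^ m * g = Fn := pow_mul_divByMonic_rootMultiplicity_eq Fn c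
  have hgc : g.eval c ≠ 0 := eval_divByMonic_pow_rootMultiplicity_ne_zero c hFn0
  have hstep : derivative Fn = (X - C c) ^ (m - 1) * (C (m : K) * g + (X - C c) * derivative g) := by
    conv_lhs => rw [← hsep]
    rw [derivative_mul, derivative_pow]
    rw [show derivative ((X : K[X]) - C c) = 1 by simp]
    rw [show ((X : K[X]) - C c) ^ m = (X - C c) ^ (m - 1) * (X - C c) by
      rw [← pow_succ, show m - 1 + 1 = m by omega]]
    ring
  by_cases hpm : ((m : ℕ) : K) = 0
  · exfalso
    have hmge : p ≤ m := Nat.le_of_dvd (by omega) ((CharP.cast_eq_zero_iff K p m).mp hpm)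
    have hdvd : (X - C c) ^ p ∣ derivative Fn := by
      refine dvd_trans (pow_dvd_pow _ hmge) ⟨derivative g, ?_⟩
      rw [hstep, hpm, map_zero, zero_mul, zero_add, ← mul_assoc, ← pow_succ,
        show m - 1 + 1 = m by omega]
    rw [part2] at hdvd
    have hdvd2 : (X - C c) ^ p ∣ (-(((X : K[X]) ^ q - 1) ^ (p - 2))) * uq := by
      rwa [neg_mul]
    have hnr : ¬ ((X : K[X]) - C c) ∣ (-(((X : K[X]) ^ q - 1) ^ (p - 2))) := by
      rw [dvd_iff_isRoot]
      simp only [IsRoot, eval_neg, eval_pow, eval_sub, eval_one, eval_X, neg_eq_zero]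
      exact pow_ne_zero _ hcq
    exact hnotdvd c ((prime_X_sub_C c).pow_dvd_of_dvd_mul_left p hnr hdvd2)
  · have hne2 : (-(((X : K[X]) ^ q - 1) ^ (p - 2))) * uq ≠ 0 :=
      mul_ne_zero (neg_ne_zero.mpr (pow_ne_zero _ hXq0)) huq0
    have e1 : rootMultiplicity c (derivative Fn) = rootMultiplicity c uq := by
      have hroot : ¬ IsRoot (-(((X : K[X]) ^ q - 1) ^ (p - 2))) c := by
        simp only [IsRoot, eval_neg, eval_pow, eval_sub, eval_one, eval_X, neg_eq_zero]
        exact pow_ne_zero _ hcq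
      rw [part2, ← neg_mul, rootMultiplicity_mul hne2, rootMultiplicity_eq_zero hroot, zero_add]
    have e2 : rootMultiplicity c (derivative Fn) = m - 1 := by
      have hroot : ¬ IsRoot (C ((m : ℕ) : K) * g + (X - C c) * derivative g) c := by
        simp only [IsRoot, eval_add, eval_mul, eval_sub, eval_X, eval_C, sub_self, zero_mul,
          add_zero]
        exact mul_ne_zero hpm hgc
      rw [hstep, rootMultiplicity_mul (by rw [← hstep]; exact hderFn0),
        rootMultiplicity_X_sub_C_pow, rootMultiplicity_eq_zero hroot, add_zero]
    omega
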